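/- For integers $j \geq 3$ and $2 \leq l \leq \lfloor(j+1)/2\rfloor - 1$, the function $\mathbf{g}_1(j,l) = \sum_{k=1}^{j-1}\mathbf{f}(2k\pi/j)\left(1 - \cos\frac{2(l-1)k\pi}{j}\right)$ satisfies $\mathbf{g}_1(j,l+1) > \mathbf{g}_1(j,l)$, where $\mathbf{f}(\varphi) = \frac{3+\cos\varphi}{16\sin^3(\varphi/2)} + \cos\varphi$. -/

import Mathlib

open Real Finset

noncomputable def fbold (φ : ℝ) : ℝ :=
  (3 + Real.cos φ) / (16 * Real.sin (φ / 2) ^ 3) + Real.cos φ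

noncomputable def g1 (j l : ℕ) : ℝ :=
  ∑ k ∈ Finset.Icc 1 (j - 1),
    fbold (2 * k * π / j) * (1 - Real.cos (2 * (l - 1 : ℝ) * k * π / j))

section helpers




lemma sinsum (t : ℝ) (n : ℕ) :
    2 * sin (t/2) * ∑ k ∈ Icc 1 n, sin (k*t) = cos (t/2) - cos ((2*(n:ℝ)+1)*(t/2)) := by
  induction n with
  | zero => simp
  | succ n ih =>
    rw [Finset.sum_Icc_succ_top (by omega)]
    push_cast
    have key : 2 * sin (t/2) * sin (((n:ℝ)+1)*t)
        = cos ((2*(n:ℝ)+1)*(t/2)) - cos ((2*((n:ℝ)+1)+1)*(t/2)) := by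
      rw [show (2*(n:ℝ)+1)*(t/2) = ((n:ℝ)+1)*t - t/2 by ring,
        show (2*((n:ℝ)+1)+1)*(t/2) = ((n:ℝ)+1)*t + t/2 by ring,
        Real.cos_sub, Real.cos_add]
      ring
    nlinarith [ih, key]


lemma cossum (t : ℝ) (n : ℕ) :
    2 * sin (t/2) * ∑ k ∈ Icc 1 n, cos (k*t) = sin ((2*(n:ℝ)+1)*(t/2)) - sin (t/2) := by
  induction n with
  | zero => simp
  | succ n ih =>
    rw [Finset.sum_Icc_succ_top (by omega)]
    push_cast
    have key : 2 * sin (t/2) * cos (((n:ℝ)+1)*t)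
        = sin ((2*((n:ℝ)+1)+1)*(t/2)) - sin ((2*(n:ℝ)+1)*(t/2)) := by
      rw [show (2*(n:ℝ)+1)*(t/2) = ((n:ℝ)+1)*t - t/2 by ring,
        show (2*((n:ℝ)+1)+1)*(t/2) = ((n:ℝ)+1)*t + t/2 by ring,
        Real.sin_sub, Real.sin_add]
      ring
    linarith [ih, key]

lemma Tsum (t : ℝ) (n : ℕ) :
    4 * sin (t/2)^2 * ∑ i ∈ Icc 1 n, ∑ k ∈ Icc 1 i, sin (k*t)
      = ((n:ℝ)+1) * sin t - sin (((n:ℝ)+1)*t) := by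
  induction n with
  | zero => simp
  | succ n ih =>
    rw [Finset.sum_Icc_succ_top (by omega)]
    have h1 := sinsum t (n+1)
    have e1 : 2 * sin (t/2) * cos (t/2) = sin t := by
      rw [show t = 2*(t/2) by ring, Real.sin_two_mul]; ring_nf
    have e2 : 2 * sin (t/2) * cos ((2*((n:ℝ)+1)+1)*(t/2))
        = sin (((n:ℝ)+1+1)*t) - sin (((n:ℝ)+1)*t) := by
      rw [show (((n:ℝ)+1+1)*t) = (2*((n:ℝ)+1)+1)*(t/2) + t/2 by ring,
        show (((n:ℝ)+1)*t) = (2*((n:ℝ)+1)+1)*(t/2) - t/2 by ring,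
        Real.sin_add, Real.sin_sub]
      ring
    push_cast at h1 ⊢
    have h4 : 4 * sin (t/2)^2 * ∑ k ∈ Icc 1 (n+1), sin ((k:ℝ)*t)
        = 2*sin (t/2)*(cos (t/2) - cos ((2*((n:ℝ)+1)+1)*(t/2))) := by
      rw [← h1]; ring
    push_cast at h4
    linarith [ih, e1, e2, h4]

lemma sinmulbd (t : ℝ) (n : ℕ) : |sin ((n:ℝ)*t)| ≤ n * |sin t| := by
  induction n with
  | zero => simp
  | succ n ih =>
    push_cast
    rw [show ((n:ℝ)+1)*t = (n:ℝ)*t + t by ring, Real.sin_add]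
    calc |sin ((n:ℝ)*t) * cos t + cos ((n:ℝ)*t) * sin t|
        ≤ |sin ((n:ℝ)*t) * cos t| + |cos ((n:ℝ)*t) * sin t| := abs_add_le _ _
      _ ≤ |sin ((n:ℝ)*t)| + |sin t| := by
          rw [abs_mul, abs_mul]
          have h1 : |sin ((n:ℝ)*t)| * |cos t| ≤ |sin ((n:ℝ)*t)| * 1 :=
            mul_le_mul_of_nonneg_left (Real.abs_cos_le_one t) (abs_nonneg _)
          have h2 : |cos ((n:ℝ)*t)| * |sin t| ≤ 1 * |sin t| :=
            mul_le_mul_of_nonneg_right (Real.abs_cos_le_one _) (abs_nonneg _)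
          linarith
      _ ≤ (n:ℝ)*|sin t| + |sin t| := by linarith
      _ = ((n:ℝ)+1)*|sin t| := by ring

lemma Tnonneg (t : ℝ) (ht : 0 < t) (ht' : t < π) (n : ℕ) :
    0 ≤ ∑ i ∈ Icc 1 n, ∑ k ∈ Icc 1 i, sin (k*t) := by
  have hs : 0 < sin (t/2) := Real.sin_pos_of_pos_of_lt_pi (by linarith) (by linarith)
  have hst : 0 ≤ sin t := le_of_lt (Real.sin_pos_of_pos_of_lt_pi ht ht')
  have h := Tsum t n
  have hb := sinmulbd t (n+1)
  push_cast at hb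
  nlinarith [abs_nonneg (sin (((n:ℝ)+1)*t)), le_abs_self (sin (((n:ℝ)+1)*t)),
    abs_of_nonneg hst, sq_nonneg (sin (t/2)), mul_pos hs hs]


lemma abel2 (f w A T : ℕ → ℝ) (hA0 : A 0 = 0) (hT0 : T 0 = 0)
    (hA : ∀ k, A (k+1) = A k + f (k+1))
    (hT : ∀ k, T (k+1) = T k + A (k+1)) (n : ℕ) :
    ∑ k ∈ Icc 1 (n+2), w k * f k
      = (∑ k ∈ Icc 1 n, (w k - 2*w (k+1) + w (k+2)) * T k)
        + (w (n+1) - w (n+2)) * T (n+1) + w (n+2) * A (n+2) := by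
  induction n with
  | zero =>
    rw [Finset.sum_Icc_succ_top (show (1:ℕ) ≤ 2 by omega),
      Finset.sum_Icc_succ_top (show (1:ℕ) ≤ 1 by omega)]
    simp only [Finset.Icc_self, Finset.sum_singleton, Finset.Icc_eq_empty_of_lt
      (show (0:ℕ) < 1 by omega), Finset.sum_empty]
    simp only [hA, hT, hA0, hT0]
    ring
  | succ n ih =>
    rw [Finset.sum_Icc_succ_top (show (1:ℕ) ≤ n+3 by omega),
      show n+3 = (n+2)+1 from rfl, ih,
      Finset.sum_Icc_succ_top (show (1:ℕ) ≤ n+1 by omega)]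
    rw [hA (n+2), hT (n+1)]
    simp only [show n+1+1 = n+2 from rfl, show n+2+1 = n+3 from rfl]
    ring


-- convexity of 1/sin^2 via AM-GM and product-to-sum
lemma csc_sq_convex (x z : ℝ) (hx : 0 < sin x) (hz : 0 < sin z)
    (hm : 0 < sin ((x+z)/2)) :
    2 / sin ((x+z)/2)^2 ≤ 1 / sin x^2 + 1 / sin z^2 := by
  have key : sin x * sin z ≤ sin ((x+z)/2)^2 := by
    have h1 : sin ((x+z)/2)^2 = (1 - cos (x+z))/2 := by
      have e1 : cos (x+z) = cos (2*((x+z)/2)) := by ring_nf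
      rw [e1, Real.cos_two_mul]
      have := Real.sin_sq_add_cos_sq ((x+z)/2)
      linarith
    have h2 : sin x * sin z = (cos (x-z) - cos (x+z))/2 := by
      rw [Real.cos_sub, Real.cos_add]; ring
    have h3 : cos (x-z) ≤ 1 := Real.cos_le_one _
    linarith
  have hxz : 0 < sin x * sin z := mul_pos hx hz
  have h4 : 2 / sin ((x+z)/2)^2 ≤ 2 / (sin x * sin z) :=
    div_le_div_of_nonneg_left (by norm_num) hxz key
  have h5 : 2 / (sin x * sin z) ≤ 1 / sin x^2 + 1 / sin z^2 := by
    rw [div_add_div _ _ (by positivity) (by positivity), div_le_div_iff₀ (by positivity) (by positivity)]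
    nlinarith [sq_nonneg (sin x - sin z), sq_nonneg (sin x * sin z), mul_pos hxz hxz]
  linarith

lemma wmono (s1 s2 : ℝ) (h1 : 0 < s1) (h12 : s1 ≤ s2) :
    (2 - s2^2)/(4*s2^2) ≤ (2 - s1^2)/(4*s1^2) := by
  have h2 : 0 < s2 := lt_of_lt_of_le h1 h12
  rw [div_le_div_iff₀ (by positivity) (by positivity)]
  nlinarith

lemma wpos (s : ℝ) (h1 : 0 < s) (h2 : s ≤ 1) : 0 < (2 - s^2)/(4*s^2) := by
  have hnum : (0:ℝ) < 2 - s^2 := by nlinarith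
  have hden : (0:ℝ) < 4*s^2 := by positivity
  exact div_pos hnum hden


lemma cos_sum_neg_one (j m : ℕ) (hj : 2 ≤ j) (hm1 : 1 ≤ m) (hm2 : m ≤ j-1) :
    ∑ k ∈ Icc 1 (j-1), cos ((k:ℝ)*(2*m*π/j)) = -1 := by
  set t : ℝ := 2*m*π/j with ht
  have hj0 : (0:ℝ) < j := by positivity
  have hmj : (m:ℝ) < j := by
    have : m < j := by omega
    exact_mod_cast this
  have hm0 : (0:ℝ) < m := by exact_mod_cast hm1
  have ht2 : t/2 = m*π/j := by rw [ht]; ring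
  have hs : 0 < sin (t/2) := by
    rw [ht2]
    apply Real.sin_pos_of_pos_of_lt_pi
    · positivity
    · rw [div_lt_iff₀ hj0]
      calc (m:ℝ)*π < j*π := by
            apply mul_lt_mul_of_pos_right hmj Real.pi_pos
        _ = π * j := by ring
  have h := cossum t (j-1)
  have hcast : ((j-1:ℕ):ℝ) = (j:ℝ) - 1 := by
    have : (1:ℕ) ≤ j := by omega
    push_cast [this]; ring
  rw [hcast] at h
  have harg : (2*((j:ℝ)-1)+1)*(t/2) = (m:ℝ)*(2*π) - t/2 := by
    rw [ht2]
    field_simp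
    ring
  rw [harg, Real.sin_nat_mul_two_pi_sub] at h
  have : 2 * sin (t/2) * ∑ k ∈ Icc 1 (j-1), cos ((k:ℝ)*t) = 2 * sin (t/2) * (-1) := by
    rw [h]; ring
  exact mul_left_cancel₀ (by positivity) this

end helpers

set_option maxHeartbeats 2000000 in
theorem g1_strict_mono (j l : ℕ) (hj : 3 ≤ j) (hl : 2 ≤ l)
    (hl' : l ≤ (j + 1) / 2 - 1) :
    g1 j l < g1 j (l + 1) := by
  have hj5 : 5 ≤ j := by omega
  have hj0 : (0:ℝ) < j := by positivity
  set a : ℕ := 2*l - 1 with ha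
  have haR : (a:ℝ) = 2*(l:ℝ) - 1 := by
    rw [ha]; push_cast [Nat.cast_sub (show 1 ≤ 2*l by omega)]; ring
  have ha3 : 3 ≤ a := by omega
  have haj : a ≤ j - 2 := by omega
  have hajR : (a:ℝ) ≤ (j:ℝ) - 2 := by
    have h1 : a + 2 ≤ j := by omega
    have h2 : ((a:ℝ) + 2) ≤ (j:ℝ) := by exact_mod_cast h1
    linarith
  have hodd : Odd a := ⟨l-1, by omega⟩
  set φ : ℝ := a*π/j with hφ
  have hφ0 : 0 < φ := by
    rw [hφ]; positivity
  have hφπ : φ < π := by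
    rw [hφ, div_lt_iff₀ hj0]
    have : (a:ℝ) < j := by linarith
    nlinarith [Real.pi_pos]
  -- sin positivity for angles kπ/j, k ∈ [1, j-1]
  have hsin : ∀ k : ℕ, 1 ≤ k → k ≤ j-1 → 0 < sin ((k:ℝ)*π/j) := by
    intro k h1 h2
    apply Real.sin_pos_of_pos_of_lt_pi
    · have : (0:ℝ) < (k:ℝ) := by exact_mod_cast h1
      positivity
    · rw [div_lt_iff₀ hj0]
      have : (k:ℝ) < j := by exact_mod_cast (show k < j by omega)
      nlinarith [Real.pi_pos]
  set w : ℕ → ℝ := fun k => (2 - sin ((k:ℝ)*π/j)^2)/(4*sin ((k:ℝ)*π/j)^2) with hw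
  -- Step 1 : difference decomposition
  have hdiff : g1 j (l+1) - g1 j l
      = (∑ k ∈ Icc 1 (j-1), w k * sin ((k:ℝ)*φ))
        + ∑ k ∈ Icc 1 (j-1), cos (2*(k:ℝ)*π/j) *
            (cos (2*((l:ℝ)-1)*k*π/j) - cos (2*(l:ℝ)*k*π/j)) := by
    unfold g1
    rw [← Finset.sum_sub_distrib, ← Finset.sum_add_distrib]
    apply Finset.sum_congr rfl
    intro k hk
    simp only [Finset.mem_Icc] at hk
    have hs := hsin k hk.1 hk.2
    have hs1 : sin ((k:ℝ)*π/j) ≤ 1 := Real.sin_le_one _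
    have hc2 : cos (2*(k:ℝ)*π/j) = 1 - 2*sin ((k:ℝ)*π/j)^2 := by
      rw [show 2*(k:ℝ)*π/j = 2*((k:ℝ)*π/j) by ring, Real.cos_two_mul]
      nlinarith [Real.sin_sq_add_cos_sq ((k:ℝ)*π/j)]
    have hfb : fbold (2*(k:ℝ)*π/j)
        = (4 - 2*sin ((k:ℝ)*π/j)^2)/(16*sin ((k:ℝ)*π/j)^3) + cos (2*(k:ℝ)*π/j) := by
      unfold fbold
      rw [show (2*(k:ℝ)*π/j)/2 = (k:ℝ)*π/j by ring, hc2]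
      ring_nf
    have hcc : cos (2*((l:ℝ)-1)*k*π/j) - cos (2*(l:ℝ)*k*π/j)
        = 2 * sin ((k:ℝ)*φ) * sin ((k:ℝ)*π/j) := by
      rw [Real.cos_sub_cos,
        show (2*((l:ℝ)-1)*k*π/j + 2*(l:ℝ)*k*π/j)/2 = (k:ℝ)*φ by rw [hφ, haR]; ring,
        show (2*((l:ℝ)-1)*k*π/j - 2*(l:ℝ)*k*π/j)/2 = -((k:ℝ)*π/j) by ring,
        Real.sin_neg]
      ring
    push_cast
    rw [show 2*((l:ℝ)+1-1)*k*π/j = 2*(l:ℝ)*k*π/j by ring]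
    have expand : fbold (2*(k:ℝ)*π/j) * (1 - cos (2*(l:ℝ)*k*π/j))
          - fbold (2*(k:ℝ)*π/j) * (1 - cos (2*((l:ℝ)-1)*k*π/j))
        = fbold (2*(k:ℝ)*π/j) * (cos (2*((l:ℝ)-1)*k*π/j) - cos (2*(l:ℝ)*k*π/j)) := by
      ring
    rw [expand, hfb, hcc, hw]
    have hs0 : sin ((k:ℝ)*π/j) ≠ 0 := ne_of_gt hs
    field_simp
    ring
  -- Step 2 : cosine part is nonnegative
  have hcospart : 0 ≤ ∑ k ∈ Icc 1 (j-1), cos (2*(k:ℝ)*π/j) *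
      (cos (2*((l:ℝ)-1)*k*π/j) - cos (2*(l:ℝ)*k*π/j)) := by
    have hperterm : ∀ k ∈ Icc 1 (j-1), cos (2*(k:ℝ)*π/j) *
        (cos (2*((l:ℝ)-1)*k*π/j) - cos (2*(l:ℝ)*k*π/j))
      = (cos ((k:ℝ)*(2*(l:ℝ)*π/j)) + cos ((k:ℝ)*(2*(((l-2:ℕ)):ℝ)*π/j))
         - cos ((k:ℝ)*(2*(((l+1:ℕ)):ℝ)*π/j)) - cos ((k:ℝ)*(2*(((l-1:ℕ)):ℝ)*π/j)))/2 := by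
      intro k hk
      have e2 : ((l-2:ℕ):ℝ) = (l:ℝ)-2 := by
        push_cast [Nat.cast_sub hl]; ring
      have e1 : ((l-1:ℕ):ℝ) = (l:ℝ)-1 := by
        push_cast [Nat.cast_sub (show 1 ≤ l by omega)]; ring
      have e3 : ((l+1:ℕ):ℝ) = (l:ℝ)+1 := by push_cast; ring
      rw [e1, e2, e3,
        show (k:ℝ)*(2*(l:ℝ)*π/j) = (2*(k:ℝ)*π/j) + (2*((l:ℝ)-1)*k*π/j) by ring,
        show (k:ℝ)*(2*((l:ℝ)-2)*π/j) = (2*((l:ℝ)-1)*k*π/j) - (2*(k:ℝ)*π/j) by ring,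
        show (k:ℝ)*(2*((l:ℝ)+1)*π/j) = (2*(k:ℝ)*π/j) + (2*(l:ℝ)*k*π/j) by ring,
        show (k:ℝ)*(2*((l:ℝ)-1)*π/j) = (2*(l:ℝ)*k*π/j) - (2*(k:ℝ)*π/j) by ring,
        Real.cos_add, Real.cos_add, Real.cos_sub, Real.cos_sub]
      ring
    rw [Finset.sum_congr rfl hperterm]
    rw [← Finset.sum_div, Finset.sum_sub_distrib, Finset.sum_sub_distrib,
      Finset.sum_add_distrib]
    have hCl : ∑ k ∈ Icc 1 (j-1), cos ((k:ℝ)*(2*(l:ℝ)*π/j)) = -1 := by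
      have := cos_sum_neg_one j l (by omega) (by omega) (by omega)
      convert this using 3
    have hCl1 : ∑ k ∈ Icc 1 (j-1), cos ((k:ℝ)*(2*((l+1:ℕ):ℝ)*π/j)) = -1 :=
      cos_sum_neg_one j (l+1) (by omega) (by omega) (by omega)
    have hClm1 : ∑ k ∈ Icc 1 (j-1), cos ((k:ℝ)*(2*((l-1:ℕ):ℝ)*π/j)) = -1 :=
      cos_sum_neg_one j (l-1) (by omega) (by omega) (by omega)
    rcases eq_or_lt_of_le hl with hl2 | hl3
    · -- l = 2
      have hClm2 : ∑ k ∈ Icc 1 (j-1), cos ((k:ℝ)*(2*((l-2:ℕ):ℝ)*π/j))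
          = (j:ℝ)-1 := by
        rw [show l-2 = 0 by omega]
        simp only [Nat.cast_zero]
        have : ∀ k ∈ Icc 1 (j-1), cos ((k:ℝ)*(2*(0:ℝ)*π/j)) = 1 := by
          intro k _; norm_num
        rw [Finset.sum_congr rfl this, Finset.sum_const, Nat.card_Icc,
          nsmul_eq_mul]
        have : ((j - 1 + 1 - 1:ℕ):ℝ) = (j:ℝ)-1 := by
          push_cast [Nat.cast_sub (show 1 ≤ j by omega)]; ring
        rw [this]; ring
      rw [hCl, hCl1, hClm1, hClm2]
      have : (0:ℝ) < (j:ℝ) := hj0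
      linarith
    · -- l ≥ 3
      have hClm2 : ∑ k ∈ Icc 1 (j-1), cos ((k:ℝ)*(2*((l-2:ℕ):ℝ)*π/j)) = -1 :=
        cos_sum_neg_one j (l-2) (by omega) (by omega) (by omega)
      rw [hCl, hCl1, hClm1, hClm2]
      norm_num
  -- Step 3 : sine part positive
  have hsinpart : 0 < ∑ k ∈ Icc 1 (j-1), w k * sin ((k:ℝ)*φ) := by
    have hy : 0 < sin (φ/2) :=
      Real.sin_pos_of_pos_of_lt_pi (by linarith) (by linarith)
    have hx : 0 < cos (φ/2) :=
      Real.cos_pos_of_mem_Ioo ⟨by linarith, by linarith⟩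
    -- key half-sum lower bound via double Abel summation
    have hkey : ∀ n : ℕ, 2*(n+2) ≤ j →
        w (n+2) * (∑ r ∈ Icc 1 (n+2), sin ((r:ℝ)*φ))
          ≤ ∑ k ∈ Icc 1 (n+2), w k * sin ((k:ℝ)*φ) := by
      intro n h2n
      have habel := abel2 (fun r => sin ((r:ℝ)*φ)) w
        (fun n => ∑ r ∈ Icc 1 n, sin ((r:ℝ)*φ))
        (fun n => ∑ i ∈ Icc 1 n, ∑ r ∈ Icc 1 i, sin ((r:ℝ)*φ))
        (by simp) (by simp)
        (fun k => Finset.sum_Icc_succ_top (by omega) _)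
        (fun k => Finset.sum_Icc_succ_top (by omega) _) n
      rw [habel]
      have h1 : 0 ≤ ∑ k ∈ Icc 1 n, (w k - 2*w (k+1) + w (k+2)) *
          (∑ i ∈ Icc 1 k, ∑ r ∈ Icc 1 i, sin ((r:ℝ)*φ)) := by
        apply Finset.sum_nonneg
        intro k hk
        simp only [Finset.mem_Icc] at hk
        apply mul_nonneg _ (Tnonneg φ hφ0 hφπ k)
        have hs1 : 0 < sin ((k:ℝ)*π/j) := hsin k hk.1 (by omega)
        have hs2 : 0 < sin (((k+1:ℕ):ℝ)*π/j) := hsin (k+1) (by omega) (by omega)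
        have hs3 : 0 < sin (((k+2:ℕ):ℝ)*π/j) := hsin (k+2) (by omega) (by omega)
        have hc := csc_sq_convex ((k:ℝ)*π/j) (((k:ℝ)+2)*π/j) hs1
          (by push_cast at hs3 ⊢; exact hs3)
          (by rw [show (((k:ℝ)*π/j) + (((k:ℝ)+2)*π/j))/2 = ((k:ℝ)+1)*π/j by ring]
              push_cast at hs2 ⊢; exact hs2)
        rw [show (((k:ℝ)*π/j) + (((k:ℝ)+2)*π/j))/2 = ((k:ℝ)+1)*π/j by ring] at hc
        have ew : ∀ s:ℝ, s ≠ 0 → (2-s^2)/(4*s^2) = (1/s^2)/2 - (1/4) := by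
          intro s hs; field_simp; ring
        have e1 : w k = (1/sin ((k:ℝ)*π/j)^2)/2 - (1/4) := ew _ (ne_of_gt hs1)
        have e2 : w (k+1) = (1/sin (((k:ℝ)+1)*π/j)^2)/2 - (1/4) := by
          rw [hw]; push_cast; exact ew _ (by push_cast at hs2; exact ne_of_gt hs2)
        have e3 : w (k+2) = (1/sin (((k:ℝ)+2)*π/j)^2)/2 - (1/4) := by
          rw [hw]; push_cast; exact ew _ (by push_cast at hs3; exact ne_of_gt hs3)
        rw [e1, e2, e3]
        simp only [div_eq_mul_inv, one_mul] at hc ⊢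
        linarith
      have h2 : 0 ≤ (w (n+1) - w (n+2)) *
          (∑ i ∈ Icc 1 (n+1), ∑ r ∈ Icc 1 i, sin ((r:ℝ)*φ)) := by
        apply mul_nonneg _ (Tnonneg φ hφ0 hφπ (n+1))
        have hs1 : 0 < sin (((n+1:ℕ):ℝ)*π/j) := hsin (n+1) (by omega) (by omega)
        have hmono : sin (((n+1:ℕ):ℝ)*π/j) ≤ sin (((n+2:ℕ):ℝ)*π/j) := by
          apply Real.sin_le_sin_of_le_of_le_pi_div_two
          · have : (0:ℝ) ≤ ((n+1:ℕ):ℝ)*π/j := by positivity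
            linarith [Real.pi_pos]
          · rw [div_le_iff₀ hj0]
            have hcast : 2*(((n:ℝ)+2)) ≤ (j:ℝ) := by
              have := (Nat.cast_le (α := ℝ)).2 h2n
              push_cast at this; linarith
            push_cast
            nlinarith [Real.pi_pos]
          · rw [div_le_div_iff_of_pos_right hj0]
            have : ((n+1:ℕ):ℝ) ≤ ((n+2:ℕ):ℝ) := by exact_mod_cast (by omega : n+1 ≤ n+2)
            nlinarith [Real.pi_pos]
        have := wmono _ _ hs1 hmono
        simp only [hw]
        linarith
      linarith
    -- w positive on [1, j-1]
    have hwpos : ∀ k : ℕ, 1 ≤ k → k ≤ j-1 → 0 < w k := by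
      intro k h1 h2
      exact wpos _ (hsin k h1 h2) (Real.sin_le_one _)
    rcases Nat.even_or_odd j with hje | hjo
    · -- j even
      obtain ⟨r, hr⟩ := hje
      set lam : ℕ := j/2 - 1 with hlamdef
      have hlam : j = 2*lam + 2 := by omega
      have hlam2 : 2 ≤ lam := by omega
      have hjR : (j:ℝ) = 2*(lam:ℝ)+2 := by exact_mod_cast congrArg (Nat.cast (R:=ℝ)) hlam
      have hIcc : ∀ m : ℕ, Icc 1 m = Ioc 0 m := by
        intro m; rw [← Finset.Icc_add_one_left_eq_Ioc 0 m, zero_add]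
      have hsym : ∀ k : ℕ, 1 ≤ k → k ≤ j-1 →
          w (j-k) * sin (((j-k:ℕ):ℝ)*φ) = w k * sin ((k:ℝ)*φ) := by
        intro k h1 h2
        have hc : ((j-k:ℕ):ℝ) = (j:ℝ)-k := by
          push_cast [Nat.cast_sub (show k ≤ j by omega)]; ring
        have hwk : w (j-k) = w k := by
          simp only [hw, hc]
          rw [show ((j:ℝ)-k)*π/j = π - (k:ℝ)*π/j by field_simp,
            Real.sin_pi_sub]
        have hsk : sin (((j-k:ℕ):ℝ)*φ) = sin ((k:ℝ)*φ) := by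
          rw [hc, show ((j:ℝ)-k)*φ = (a:ℝ)*π - (k:ℝ)*φ by rw [hφ]; field_simp,
            Real.sin_nat_mul_pi_sub, Odd.neg_one_pow hodd]
          ring
        rw [hwk, hsk]
      have hsplit : ∑ k ∈ Icc 1 (j-1), w k * sin ((k:ℝ)*φ)
          = 2 * (∑ k ∈ Icc 1 lam, w k * sin ((k:ℝ)*φ))
            + w (lam+1) * sin (((lam+1:ℕ):ℝ)*φ) := by
        rw [hIcc (j-1),
          ← Finset.sum_Ioc_consecutive _ (Nat.zero_le (lam+1)) (show lam+1 ≤ j-1 by omega),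
          ← Finset.sum_Ioc_consecutive _ (Nat.zero_le lam) (show lam ≤ lam+1 by omega)]
        have hmid : ∑ k ∈ Ioc lam (lam+1), w k * sin ((k:ℝ)*φ)
            = w (lam+1) * sin (((lam+1:ℕ):ℝ)*φ) := by
          rw [Nat.Ioc_succ_singleton, Finset.sum_singleton]
        have hrefl : ∑ k ∈ Ioc (lam+1) (j-1), w k * sin ((k:ℝ)*φ)
            = ∑ k ∈ Ioc 0 lam, w k * sin ((k:ℝ)*φ) := by
          apply Finset.sum_nbij' (fun k => j - k) (fun k => j - k)
          · intro x hx; simp only [Finset.mem_Ioc] at hx ⊢; omega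
          · intro x hx; simp only [Finset.mem_Ioc] at hx ⊢; omega
          · intro x hx; simp only [Finset.mem_Ioc] at hx; omega
          · intro x hx; simp only [Finset.mem_Ioc] at hx; omega
          · intro x hx; simp only [Finset.mem_Ioc] at hx
            exact (hsym x (by omega) (by omega)).symm
        rw [hmid, hrefl, ← hIcc lam]
        ring
      have hjne : (2*(lam:ℝ)+2) ≠ 0 := by positivity
      have hargmid : ((lam+1:ℕ):ℝ)*π/(j:ℝ) = π/2 := by
        push_cast; rw [hjR]; field_simp
      have hwmid : w (lam+1) = 1/4 := by
        simp only [hw]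
        rw [hargmid, Real.sin_pi_div_two]
        norm_num
      have hsmid : sin (((lam+1:ℕ):ℝ)*φ) = -cos ((l:ℝ)*π) := by
        rw [show ((lam+1:ℕ):ℝ)*φ = (l:ℝ)*π - π/2 by
          rw [hφ, haR, hjR]; push_cast; field_simp]
        rw [Real.sin_sub, Real.sin_nat_mul_pi, Real.cos_pi_div_two, Real.sin_pi_div_two]
        ring
      have hc1 : cos ((l:ℝ)*π) = 1 ∨ cos ((l:ℝ)*π) = -1 := by
        rcases Nat.even_or_odd l with ⟨p, hp⟩ | ⟨p, hp⟩
        · left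
          rw [show (l:ℝ)*π = (p:ℝ)*(2*π) by push_cast [hp]; ring]
          exact Real.cos_nat_mul_two_pi p
        · right
          rw [show (l:ℝ)*π = (p:ℝ)*(2*π) + π by push_cast [hp]; ring]
          exact Real.cos_nat_mul_two_pi_add_pi p
      have hjR6 : (6:ℝ) ≤ (j:ℝ) := by
        have : (6:ℕ) ≤ j := by omega
        exact_mod_cast this
      have hAl : ∑ r ∈ Icc 1 lam, sin ((r:ℝ)*φ)
          = (cos (φ/2) + cos ((l:ℝ)*π)*sin (φ/2))/(2*sin (φ/2)) := by
        have h := sinsum φ lam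
        have harg : (2*(lam:ℝ)+1)*(φ/2) = (l:ℝ)*π - (π/2 + φ/2) := by
          rw [hφ, haR, hjR]; field_simp; ring
        rw [harg, Real.cos_sub, Real.cos_add, Real.cos_pi_div_two,
          Real.sin_pi_div_two, Real.sin_nat_mul_pi] at h
        rw [eq_div_iff (by positivity)]
        linear_combination h
      -- quantities for the tail estimate
      have hsu : 0 < sin (π/(j:ℝ)) := by
        apply Real.sin_pos_of_pos_of_lt_pi (by positivity)
        rw [div_lt_iff₀ hj0]
        nlinarith [Real.pi_pos, hjR6]
      have hcu : 0 < cos (π/(j:ℝ)) := by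
        apply Real.cos_pos_of_mem_Ioo
        constructor
        · have : (0:ℝ) < π/(j:ℝ) := by positivity
          linarith [Real.pi_pos]
        · rw [div_lt_iff₀ hj0]
          nlinarith [Real.pi_pos, hjR6]
      have hcu1 : cos (π/(j:ℝ)) < 1 := by
        have h01 : 0 < π/(j:ℝ) := by positivity
        have hne : cos (π/(j:ℝ)) ≠ 1 := by
          intro hone
          have hb1 : -(2*π) < π/(j:ℝ) := by linarith [Real.pi_pos]
          have hb2 : π/(j:ℝ) < 2*π := by
            have := div_le_self Real.pi_pos.le (show (1:ℝ) ≤ (j:ℝ) by linarith)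
            linarith [Real.pi_pos]
          have := (Real.cos_eq_one_iff_of_lt_of_lt hb1 hb2).1 hone
          linarith
        exact lt_of_le_of_ne (Real.cos_le_one _) hne
      have hpyth : sin (π/(j:ℝ))^2 + cos (π/(j:ℝ))^2 = 1 := Real.sin_sq_add_cos_sq _
      have hwlam : w lam = (2 - cos (π/(j:ℝ))^2)/(4*cos (π/(j:ℝ))^2) := by
        simp only [hw]
        rw [show (lam:ℝ)*π/j = π/2 - π/(j:ℝ) by rw [hjR]; field_simp; ring,
          Real.sin_pi_div_two_sub]
      have haj3 : (a:ℝ) ≤ (j:ℝ)-3 := by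
        have h1 : a + 3 ≤ j := by omega
        have h2 : ((a:ℝ) + 3) ≤ (j:ℝ) := by exact_mod_cast h1
        linarith
      have hcot : sin (π/(j:ℝ))*sin (φ/2) < cos (φ/2)*cos (π/(j:ℝ)) := by
        have hlt : φ/2 + π/(j:ℝ) < π/2 := by
          have e : φ/2 + π/(j:ℝ) = ((a:ℝ)+2)*π/(2*j) := by
            rw [hφ]; field_simp
          rw [e, div_lt_div_iff₀ (by positivity) (by norm_num)]
          nlinarith [Real.pi_pos]
        have h0 : 0 < cos (φ/2 + π/(j:ℝ)) := by
          apply Real.cos_pos_of_mem_Ioo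
          constructor
          · have h1 : 0 < φ/2 + π/(j:ℝ) := by positivity
            linarith [Real.pi_pos]
          · exact hlt
        rw [Real.cos_add] at h0
        linarith
      have hklow := hkey (lam-2) (by omega)
      rw [show lam-2+2 = lam by omega, hAl] at hklow
      rw [hsplit, hwmid, hsmid]
      set x : ℝ := cos (φ/2)
      set y : ℝ := sin (φ/2)
      set cu : ℝ := cos (π/(j:ℝ))
      set su : ℝ := sin (π/(j:ℝ))
      rcases hc1 with hc | hc
      · -- c = 1
        rw [hc] at hklow ⊢
        have hq : 1 < (x+y)/y := by
          rw [lt_div_iff₀ hy]; linarith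
        have hwq : 1/4 < w lam := by
          rw [hwlam, lt_div_iff₀ (by positivity)]
          nlinarith
        have keyineq : 1/4 < 2*(w lam * ((x + 1*y)/(2*y))) := by
          have h1 : (1:ℝ)/4 * 1 < w lam * ((x+y)/y) :=
            mul_lt_mul'' hwq hq (by norm_num) (by norm_num)
          have h2 : 2*(w lam * ((x + 1*y)/(2*y))) = w lam * ((x+y)/y) := by
            field_simp
          rw [h2]; linarith
        linarith
      · -- c = -1
        rw [hc] at hklow ⊢
        have h2mc : (0:ℝ) < 2 - cu^2 := by nlinarith
        have hnn : 0 ≤ 2 - cu^2 - 2*su*cu := by nlinarith [sq_nonneg (su - cu)]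
        have k1 : (2-cu^2)*(su*y) < (2-cu^2)*(x*cu) :=
          mul_lt_mul_of_pos_left hcot h2mc
        have k2 : 2*su^2*cu*y ≤ (2-cu^2)*(su*y) := by
          nlinarith [mul_nonneg (mul_nonneg hsu.le hy.le) hnn]
        have key3 : 0 < (2-cu^2)*(x-y) + cu^2*y := by
          have hmulcu : 0 < ((2-cu^2)*(x-y) + cu^2*y)*cu := by
            nlinarith [k1, k2, mul_pos hy hcu]
          by_contra hcon
          push_neg at hcon
          nlinarith [mul_nonpos_of_nonpos_of_nonneg hcon hcu.le]
        have e : 2*(w lam * ((x + (-1)*y)/(2*y))) + 1/4*(-(-1))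
            = ((2-cu^2)*(x-y) + cu^2*y)/(4*cu^2*y) := by
          rw [hwlam]
          field_simp
          ring
        have : 0 < ((2-cu^2)*(x-y) + cu^2*y)/(4*cu^2*y) :=
          div_pos key3 (by positivity)
        nlinarith [hklow, this, e]

    · -- j odd
      obtain ⟨lam, hlam⟩ := hjo
      have hlam2 : 2 ≤ lam := by omega
      have hjR : (j:ℝ) = 2*(lam:ℝ)+1 := by exact_mod_cast congrArg (Nat.cast (R:=ℝ)) hlam
      -- symmetry
      have hsym : ∀ k : ℕ, 1 ≤ k → k ≤ j-1 →
          w (j-k) * sin (((j-k:ℕ):ℝ)*φ) = w k * sin ((k:ℝ)*φ) := by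
        intro k h1 h2
        have hc : ((j-k:ℕ):ℝ) = (j:ℝ)-k := by
          push_cast [Nat.cast_sub (show k ≤ j by omega)]; ring
        have hwk : w (j-k) = w k := by
          simp only [hw, hc]
          rw [show ((j:ℝ)-k)*π/j = π - (k:ℝ)*π/j by field_simp,
            Real.sin_pi_sub]
        have hsk : sin (((j-k:ℕ):ℝ)*φ) = sin ((k:ℝ)*φ) := by
          rw [hc, show ((j:ℝ)-k)*φ = (a:ℝ)*π - (k:ℝ)*φ by rw [hφ]; field_simp,
            Real.sin_nat_mul_pi_sub, Odd.neg_one_pow hodd]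
          ring
        rw [hwk, hsk]
      have hIcc : ∀ m : ℕ, Icc 1 m = Ioc 0 m := by
        intro m; rw [← Finset.Icc_add_one_left_eq_Ioc 0 m, zero_add]
      have hsplit : ∑ k ∈ Icc 1 (j-1), w k * sin ((k:ℝ)*φ)
          = 2 * ∑ k ∈ Icc 1 lam, w k * sin ((k:ℝ)*φ) := by
        rw [hIcc (j-1),
          ← Finset.sum_Ioc_consecutive _ (Nat.zero_le lam) (show lam ≤ j-1 by omega)]
        have hrefl : ∑ k ∈ Ioc lam (j-1), w k * sin ((k:ℝ)*φ)
            = ∑ k ∈ Ioc 0 lam, w k * sin ((k:ℝ)*φ) := by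
          apply Finset.sum_nbij' (fun k => j - k) (fun k => j - k)
          · intro x hx; simp only [Finset.mem_Ioc] at hx ⊢; omega
          · intro x hx; simp only [Finset.mem_Ioc] at hx ⊢; omega
          · intro x hx; simp only [Finset.mem_Ioc] at hx; omega
          · intro x hx; simp only [Finset.mem_Ioc] at hx; omega
          · intro x hx; simp only [Finset.mem_Ioc] at hx
            exact (hsym x (by omega) (by omega)).symm
        rw [hrefl, ← hIcc lam]
        ring
      -- value of half partial sine sum
      have hAl : ∑ r ∈ Icc 1 lam, sin ((r:ℝ)*φ) = cos (φ/2)/(2*sin (φ/2)) := by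
        have h := sinsum φ lam
        have harg : (2*(lam:ℝ)+1)*(φ/2) = (l:ℝ)*π - π/2 := by
          rw [hφ, haR, ← hjR]; field_simp
        rw [harg, show (l:ℝ)*π - π/2 = -(π/2 - (l:ℝ)*π) by ring, Real.cos_neg,
          Real.cos_pi_div_two_sub, Real.sin_nat_mul_pi] at h
        rw [eq_div_iff (by positivity)]
        linarith
      have hw2 : 0 < w lam := hwpos lam (by omega) (by omega)
      have hkl := hkey (lam - 2) (by omega)
      rw [show lam - 2 + 2 = lam by omega] at hkl
      rw [hsplit]
      have : 0 < w lam * (cos (φ/2)/(2*sin (φ/2))) := by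
        apply mul_pos hw2 (div_pos hx (by positivity))
      rw [hAl] at hkl
      linarith
  linarith [hdiff, hcospart, hsinpart]
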